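/- Let k ≥ 1 and let σ be the permutation of {1, …, 3^k − 1} given by σ(i) = 2i mod 3^k. Then the orbit of 1 under σ is exactly the set of integers in {1, …, 3^k − 1} coprime to 3. -/

import Mathlib

lemma four_pow (j : ℕ) : ∃ u, u % 3 = 1 ∧ 4 ^ (3 ^ j) = 1 + 3 ^ (j+1) * u := by
  induction j with
  | zero => exact ⟨1, by norm_num⟩
  | succ j ih =>
    obtain ⟨u, hu, h⟩ := ih
    refine ⟨u + 3 ^ (j+1) * u^2 + 3 ^ (2*j+1) * u^3, ?_, ?_⟩
    · obtain ⟨a, ha⟩ : (3:ℕ) ∣ 3 ^ (j+1) := dvd_pow_self 3 (by omega)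
      obtain ⟨b, hb⟩ : (3:ℕ) ∣ 3 ^ (2*j+1) := dvd_pow_self 3 (by omega)
      rw [ha, hb]
      have e : u + 3 * a * u ^ 2 + 3 * b * u ^ 3 = u + 3 * (a * u^2 + b * u^3) := by ring
      rw [e, Nat.add_mul_mod_self_left, hu]
    · have e : (4:ℕ) ^ 3 ^ (j+1) = (4 ^ 3 ^ j) ^ 3 := by rw [← pow_mul, ← pow_succ]
      rw [e, h]
      ring

lemma order_two (k : ℕ) (hk : 1 ≤ k) :
    orderOf (ZMod.unitOfCoprime 2 ((by norm_num : Nat.Coprime 2 3).pow_right k) :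
      (ZMod (3^k))ˣ) = 2 * 3 ^ (k-1) := by
  haveI : NeZero (3^k) := ⟨by positivity⟩
  obtain ⟨j, rfl⟩ : ∃ j, k = j + 1 := ⟨k-1, by omega⟩
  set u2 : (ZMod (3^(j+1)))ˣ := ZMod.unitOfCoprime 2 _ with hu2
  have hcoe : (u2 : ZMod (3^(j+1))) = ((2:ℕ) : ZMod (3^(j+1))) := by simp [hu2]
  have key : ∀ e, u2 ^ e = 1 ↔ (((2:ℕ)^e : ℕ) : ZMod (3^(j+1))) = 1 := by
    intro e
    rw [Units.ext_iff, Units.val_pow_eq_pow_val, Units.val_one, hcoe, Nat.cast_pow]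
  simp only [show j + 1 - 1 = j from rfl]
  apply orderOf_eq_of_pow_and_pow_div_prime (by positivity)
  · rw [key]
    obtain ⟨u, hu, h4⟩ := four_pow j
    have e2 : (2:ℕ) ^ (2 * 3 ^ j) = 4 ^ 3 ^ j := by rw [pow_mul]; norm_num
    rw [e2, h4, Nat.cast_add, Nat.cast_one, Nat.cast_mul, ZMod.natCast_self, zero_mul, add_zero]
  · intro p hp hd
    have hp23 : p = 2 ∨ p = 3 := by
      rcases (Nat.Prime.dvd_mul hp).mp hd with h | h
      · left; exact (Nat.prime_dvd_prime_iff_eq hp Nat.prime_two).mp h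
      · right; exact (Nat.prime_dvd_prime_iff_eq hp Nat.prime_three).mp
          (hp.dvd_of_dvd_pow h)
    rcases hp23 with rfl | rfl
    · have hq : 2 * 3 ^ j / 2 = 3 ^ j := by omega
      rw [hq]
      intro h
      rw [key] at h
      have h3 : (((2:ℕ)^(3^j) : ℕ) : ZMod 3) = 1 := by
        have := congrArg (ZMod.castHom (dvd_pow_self 3 (by omega : j+1 ≠ 0)) (ZMod 3)) h
        rwa [map_natCast, map_one] at this
      have hodd : Odd (3^j) := Odd.pow (by decide)
      rw [Nat.cast_pow, show ((2:ℕ) : ZMod 3) = -1 from by decide,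
        hodd.neg_one_pow] at h3
      exact absurd h3 (by decide)
    · have hj : 1 ≤ j := by
        by_contra h
        interval_cases j
        · simp at hd
      obtain ⟨i, rfl⟩ : ∃ i, j = i + 1 := ⟨j-1, by omega⟩
      have hdiv : 2 * 3 ^ (i+1) / 3 = 2 * 3 ^ i := by
        rw [pow_succ]; omega
      rw [hdiv]
      intro h
      rw [key] at h
      obtain ⟨u, hu, h4⟩ := four_pow i
      have e2 : (2:ℕ) ^ (2 * 3 ^ i) = 4 ^ 3 ^ i := by rw [pow_mul]; norm_num
      rw [e2, h4] at h
      push_cast at h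
      have h0 : (((3:ℕ)^(i+1) * u : ℕ) : ZMod (3^(i+1+1))) = 0 := by
        push_cast
        have e1 : ((1:ZMod (3^(i+1+1))) + (3:ZMod (3^(i+1+1)))^(i+1) * (u:ZMod (3^(i+1+1)))) = 1 + 0 := by
          rw [add_zero]; exact_mod_cast h
        exact add_left_cancel e1
      rw [ZMod.natCast_eq_zero_iff] at h0
      have h3u : 3 ∣ u := by
        have e3 : (3:ℕ)^(i+1+1) = 3^(i+1) * 3 := by ring
        rw [e3] at h0
        exact (mul_dvd_mul_iff_left (by positivity : (3:ℕ)^(i+1) ≠ 0)).mp h0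
      omega

theorem orbit_of_one_in_shuffle (k : ℕ) (hk : 1 ≤ k) :
    ∀ m : ℕ, 1 ≤ m → m ≤ 3 ^ k - 1 →
      ((∃ t : ℕ, 2 ^ t * 1 % 3 ^ k = m) ↔ Nat.Coprime m 3) := by
  haveI : NeZero (3^k) := ⟨by positivity⟩
  intro m hm1 hm2
  have hmlt : m < 3^k := by
    have : 1 ≤ 3^k := Nat.one_le_pow _ _ (by norm_num)
    omega
  constructor
  · rintro ⟨t, rfl⟩
    rw [mul_one]
    rw [Nat.coprime_comm, Nat.Prime.coprime_iff_not_dvd Nat.prime_three,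
      Nat.dvd_mod_iff (dvd_pow_self 3 (by omega))]
    exact (Nat.Prime.coprime_iff_not_dvd Nat.prime_three).mp
      ((by norm_num : Nat.Coprime 3 2).pow_right t)
  · intro hm
    set u2 : (ZMod (3^k))ˣ :=
      ZMod.unitOfCoprime 2 ((by norm_num : Nat.Coprime 2 3).pow_right k) with hu2
    have hcard : Nat.card (ZMod (3^k))ˣ = 2 * 3 ^ (k-1) := by
      rw [Nat.card_eq_fintype_card, ZMod.card_units_eq_totient,
        Nat.totient_prime_pow Nat.prime_three (by omega)]
      ring
    have htop : Subgroup.zpowers u2 = ⊤ := by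
      apply Subgroup.eq_top_of_card_eq
      rw [Nat.card_zpowers, hcard, hu2, order_two k hk]
    set um : (ZMod (3^k))ˣ := ZMod.unitOfCoprime m (hm.pow_right k) with hum
    have hmem : um ∈ Submonoid.powers u2 := by
      rw [mem_powers_iff_mem_zpowers, htop]
      exact Subgroup.mem_top um
    obtain ⟨t, ht⟩ := hmem
    refine ⟨t, ?_⟩
    have hv := congrArg Units.val ht
    rw [Units.val_pow_eq_pow_val, hu2, hum, ZMod.coe_unitOfCoprime,
      ZMod.coe_unitOfCoprime] at hv
    have : (((2:ℕ)^t : ℕ) : ZMod (3^k)) = ((m:ℕ) : ZMod (3^k)) := by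
      push_cast
      exact_mod_cast hv
    rw [ZMod.natCast_eq_natCast_iff] at this
    unfold Nat.ModEq at this
    rw [Nat.mod_eq_of_lt hmlt] at this
    rw [mul_one]
    exact this
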